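/- For odd squarefree d with gcd(d, 2mn) = 1, the Salié sum T(m, n; d) = ∑_{x mod d, gcd(x,d)=1} (x/d) e((m x̄ + n x)/d) satisfies |T(m, n; d)| ≤ 2^{ω(d)} √d, where ω(d) is the number of distinct prime factors of d. -/

import Mathlib

noncomputable def e (x : ℝ) : ℂ := Complex.exp (2 * Real.pi * Complex.I * x)

/-- The Salié sum `T(m, n; d) = ∑_{x mod d, (x,d)=1} (x/d) e((m x̄ + n x)/d)`,
where `x̄` is the multiplicative inverse of `x` modulo `d`. -/
noncomputable def T (m n : ℤ) (d : ℕ) : ℂ :=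
  ∑ x ∈ (Finset.range d).filter (fun x => Nat.gcd x d = 1),
    (jacobiSym (x : ℤ) d : ℂ) *
      e (((m : ℝ) * ((((x : ZMod d)⁻¹).val : ℕ) : ℝ) + (n : ℝ) * (x : ℝ)) / (d : ℝ))

open Finset

noncomputable def Complex.abs : AbsoluteValue ℂ ℝ := IsAbsoluteValue.toAbsoluteValue (norm : ℂ → ℝ)

lemma Complex.abs_apply' (z : ℂ) : Complex.abs z = ‖z‖ := rfl

noncomputable def T2 (m n : ℤ) (d : ℕ) [NeZero d] : ℂ :=
  ∑ x : (ZMod d)ˣ, (jacobiSym (((x : ZMod d).val : ℤ)) d : ℂ) *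
    ZMod.stdAddChar ((m : ZMod d) * ((x⁻¹ : (ZMod d)ˣ) : ZMod d) + (n : ZMod d) * (x : ZMod d))

lemma e_int_div (j : ℤ) (d : ℕ) [NeZero d] :
    e ((j : ℝ) / (d : ℝ)) = ZMod.stdAddChar ((j : ZMod d)) := by
  rw [ZMod.stdAddChar_coe]
  unfold e
  congr 1
  push_cast
  ring

lemma T_eq_T2 (m n : ℤ) (d : ℕ) [NeZero d] : T m n d = T2 m n d := by
  rw [T, T2]
  refine Finset.sum_nbij' (fun x => if h : Nat.gcd x d = 1 then ZMod.unitOfCoprime x h else 1)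
    (fun u => (u : ZMod d).val) ?_ ?_ ?_ ?_ ?_
  · intro x hx
    exact Finset.mem_univ _
  · intro u _
    simp only [Finset.mem_filter, Finset.mem_range]
    exact ⟨ZMod.val_lt _, ZMod.val_coe_unit_coprime u⟩
  · intro x hx
    simp only [Finset.mem_filter, Finset.mem_range] at hx
    simp only [dif_pos hx.2]
    rw [ZMod.coe_unitOfCoprime, ZMod.val_cast_of_lt hx.1]
  · intro u _
    have h := ZMod.val_coe_unit_coprime u
    simp only [dif_pos h]
    apply Units.ext
    push_cast
    rw [ZMod.coe_unitOfCoprime, ZMod.natCast_zmod_val]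
  · intro x hx
    simp only [Finset.mem_filter, Finset.mem_range] at hx
    simp only [dif_pos hx.2]
    have hcoe : ((ZMod.unitOfCoprime x hx.2 : (ZMod d)ˣ) : ZMod d) = (x : ZMod d) :=
      ZMod.coe_unitOfCoprime x hx.2
    congr 1
    · rw [hcoe, ZMod.val_cast_of_lt hx.1]
    · have : ((m : ℝ) * ((((x : ZMod d)⁻¹).val : ℕ) : ℝ) + (n : ℝ) * (x : ℝ))
        = (((m * (((x : ZMod d)⁻¹).val : ℤ) + n * (x : ℤ)) : ℤ) : ℝ) := by push_cast; ring
      rw [this, e_int_div]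
      congr 1
      push_cast
      rw [ZMod.natCast_zmod_val, ← ZMod.inv_coe_unit, hcoe]

section Prime

variable {p : ℕ} [Fact p.Prime]


section Prime

variable {p : ℕ} [Fact p.Prime]

lemma zmod_two_ne_zero (hp : p ≠ 2) : (2 : ZMod p) ≠ 0 := by
  have : ((2 : ℕ) : ZMod p) ≠ 0 := by
    rw [Ne, ZMod.natCast_eq_zero_iff]
    intro h
    rcases (Nat.prime_dvd_prime_iff_eq Fact.out Nat.prime_two).mp h with rfl
    exact hp rfl
  simpa using this

lemma unit_mul_inv (y : (ZMod p)ˣ) :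
    (y : ZMod p) * ((y⁻¹ : (ZMod p)ˣ) : ZMod p) = 1 := by
  rw [← Units.val_mul, mul_inv_cancel, Units.val_one]

lemma fiber_sum (hp : p ≠ 2) (t : ZMod p) :
    ∑ x ∈ Finset.univ.filter
        (fun x : (ZMod p)ˣ => (x : ZMod p) + ((x⁻¹ : (ZMod p)ˣ) : ZMod p) = t),
      quadraticChar (ZMod p) (x : ZMod p)
    = quadraticChar (ZMod p) (t + 2) + quadraticChar (ZMod p) (t - 2) := by
  have h2 : (2 : ZMod p) ≠ 0 := zmod_two_ne_zero hp
  by_cases hroot : ∃ x : (ZMod p)ˣ, (x : ZMod p) + ((x⁻¹ : (ZMod p)ˣ) : ZMod p) = t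
  · obtain ⟨x, hx⟩ := hroot
    have hxinv := unit_mul_inv x
    by_cases hx1 : (x : ZMod p) = 1
    · -- t = 2, fiber = {1}
      have hxu : x = 1 := Units.ext hx1
      have ht : t = 2 := by rw [← hx, hxu]; norm_num
      have hfil : Finset.univ.filter
          (fun y : (ZMod p)ˣ => (y : ZMod p) + ((y⁻¹ : (ZMod p)ˣ) : ZMod p) = t) = {1} := by
        ext y
        simp only [Finset.mem_filter, Finset.mem_univ, true_and, Finset.mem_singleton]
        constructor
        · intro hy
          have hyinv := unit_mul_inv y
          have hsq : ((y : ZMod p) - 1) ^ 2 = 0 := by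
            rw [ht] at hy
            linear_combination (y : ZMod p) * hy - hyinv
          have h0 : (y : ZMod p) - 1 = 0 :=
            pow_eq_zero_iff (n := 2) (by norm_num) |>.mp hsq
          exact Units.ext (by rw [Units.val_one]; linear_combination h0)
        · rintro rfl
          rw [← hxu, hx, ht]
      rw [hfil, Finset.sum_singleton, ht]
      have h4 : (2 : ZMod p) + 2 = 2 ^ 2 := by ring
      rw [Units.val_one, map_one, h4, quadraticChar_sq_one' h2]
      simp
    · by_cases hxm1 : (x : ZMod p) = -1
      · -- t = -2, fiber = {-1}
        have hxu : x = -1 := Units.ext (by simpa using hxm1)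
        have ht : t = -2 := by rw [← hx, hxu]; norm_num
        have hfil : Finset.univ.filter
            (fun y : (ZMod p)ˣ => (y : ZMod p) + ((y⁻¹ : (ZMod p)ˣ) : ZMod p) = t) = {-1} := by
          ext y
          simp only [Finset.mem_filter, Finset.mem_univ, true_and, Finset.mem_singleton]
          constructor
          · intro hy
            have hyinv := unit_mul_inv y
            have hsq : ((y : ZMod p) + 1) ^ 2 = 0 := by
              rw [ht] at hy
              linear_combination (y : ZMod p) * hy - hyinv
            have h0 : (y : ZMod p) + 1 = 0 :=
              pow_eq_zero_iff (n := 2) (by norm_num) |>.mp hsq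
            refine Units.ext ?_
            have : ((-1 : (ZMod p)ˣ) : ZMod p) = -1 := by simp
            rw [this]
            linear_combination h0
          · rintro rfl
            rw [← hxu, hx, ht]
        rw [hfil, Finset.sum_singleton, ht]
        have h4 : (-2 : ZMod p) - 2 = (-1) * 2 ^ 2 := by ring
        have h0 : (-2 : ZMod p) + 2 = 0 := by ring
        have hm : ((-1 : (ZMod p)ˣ) : ZMod p) = -1 := by simp
        rw [h4, map_mul, quadraticChar_sq_one' h2, h0, hm]
        simp
      · -- generic case: fiber = {x, x⁻¹}
        have hxne : x ≠ x⁻¹ := by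
          intro h
          rw [← h] at hxinv
          have : ((x : ZMod p) - 1) * ((x : ZMod p) + 1) = 0 := by
            linear_combination hxinv
          rcases mul_eq_zero.mp this with h' | h'
          · exact hx1 (by linear_combination h')
          · exact hxm1 (by linear_combination h')
        have hfil : Finset.univ.filter
            (fun y : (ZMod p)ˣ => (y : ZMod p) + ((y⁻¹ : (ZMod p)ˣ) : ZMod p) = t)
            = {x, x⁻¹} := by
          ext y
          simp only [Finset.mem_filter, Finset.mem_univ, true_and, Finset.mem_insert,
            Finset.mem_singleton]
          constructor
          · intro hy
            have hyinv := unit_mul_inv y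
            have hprod : ((y : ZMod p) - x) * ((y : ZMod p) - ((x⁻¹ : (ZMod p)ˣ) : ZMod p))
                = 0 := by
              linear_combination (-(y : ZMod p)) * hx + (y : ZMod p) * hy + hxinv - hyinv
            rcases mul_eq_zero.mp hprod with h' | h'
            · exact Or.inl (Units.ext (by linear_combination h'))
            · exact Or.inr (Units.ext (by linear_combination h'))
          · rintro (rfl | rfl)
            · exact hx
            · rw [inv_inv, add_comm]
              exact hx
        rw [hfil, Finset.sum_pair hxne]
        have hx0 : (x : ZMod p) ≠ 0 := Units.ne_zero x
        have hχx := quadraticChar_dichotomy hx0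
        have hinv_eq : quadraticChar (ZMod p) ((x⁻¹ : (ZMod p)ˣ) : ZMod p)
            = quadraticChar (ZMod p) (x : ZMod p) := by
          have h1 : quadraticChar (ZMod p) (x : ZMod p)
              * quadraticChar (ZMod p) ((x⁻¹ : (ZMod p)ˣ) : ZMod p) = 1 := by
            rw [← map_mul, hxinv, map_one]
          rcases hχx with h | h <;> rw [h] at h1 ⊢ <;> omega
        have key1 : ((1 : ZMod p) + x) ^ 2 = (x : ZMod p) * (t + 2) := by
          linear_combination (x : ZMod p) * hx - hxinv
        have key2 : ((1 : ZMod p) - x) ^ 2 = (x : ZMod p) * (t - 2) := by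
          linear_combination (x : ZMod p) * hx - hxinv
        have h1x : (1 : ZMod p) + x ≠ 0 := by
          intro h
          exact hxm1 (by linear_combination h)
        have h2x : (1 : ZMod p) - x ≠ 0 := by
          intro h
          exact hx1 (by linear_combination -h)
        have e1 : quadraticChar (ZMod p) (t + 2) = quadraticChar (ZMod p) (x : ZMod p) := by
          have := quadraticChar_sq_one' (F := ZMod p) h1x
          rw [key1, map_mul] at this
          rcases hχx with h | h <;> rw [h] at this ⊢ <;> omega
        have e2 : quadraticChar (ZMod p) (t - 2) = quadraticChar (ZMod p) (x : ZMod p) := by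
          have := quadraticChar_sq_one' (F := ZMod p) h2x
          rw [key2, map_mul] at this
          rcases hχx with h | h <;> rw [h] at this ⊢ <;> omega
        rw [e1, e2, hinv_eq]
  · -- no root
    have hfil : Finset.univ.filter
        (fun y : (ZMod p)ˣ => (y : ZMod p) + ((y⁻¹ : (ZMod p)ˣ) : ZMod p) = t) = ∅ := by
      rw [Finset.filter_false_of_mem]
      intro y _
      exact fun h => hroot ⟨y, h⟩
    rw [hfil, Finset.sum_empty]
    have hnsq : ¬ IsSquare (t ^ 2 - 4) := by
      rintro ⟨s, hs⟩
      apply hroot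
      have h1 : ((t + s) / 2) * ((t - s) / 2) = 1 := by
        field_simp
        linear_combination hs
      refine ⟨Units.mkOfMulEqOne _ _ h1, ?_⟩
      show (t + s) / 2 + (t - s) / 2 = t
      field_simp
      ring
    have hval : quadraticChar (ZMod p) (t + 2) * quadraticChar (ZMod p) (t - 2) = -1 := by
      rw [← map_mul]
      have h' : (t + 2) * (t - 2) = t ^ 2 - 4 := by ring
      rw [h']
      exact quadraticChar_neg_one_iff_not_isSquare.mpr hnsq
    by_cases ha0 : t + 2 = 0
    · rw [ha0] at hval; simp at hval
    by_cases hb0 : t - 2 = 0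
    · rw [hb0] at hval; simp at hval
    rcases quadraticChar_dichotomy ha0 with h | h <;>
      rcases quadraticChar_dichotomy hb0 with h' | h' <;> rw [h, h'] at hval ⊢ <;> omega


-- assume fiber_sum from a2
noncomputable def χC (p : ℕ) [Fact p.Prime] : MulChar (ZMod p) ℂ :=
  (quadraticChar (ZMod p)).ringHomComp (Int.castRingHom ℂ)

lemma abs_stdAddChar (z : ZMod p) : Complex.abs (ZMod.stdAddChar z) = 1 := by
  rw [ZMod.stdAddChar_apply]
  exact Circle.norm_coe _

lemma abs_chi_le (a : ZMod p) : Complex.abs ((quadraticChar (ZMod p) a : ℤ) : ℂ) ≤ 1 := by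
  rcases quadraticChar_isQuadratic (ZMod p) a with h | h | h <;> rw [h] <;> simp

lemma abs_chi_unit {a : ZMod p} (ha : a ≠ 0) :
    Complex.abs ((quadraticChar (ZMod p) a : ℤ) : ℂ) = 1 := by
  rcases quadraticChar_dichotomy ha with h | h <;> rw [h] <;> simp

lemma abs_gaussSum (hp : p ≠ 2) :
    Complex.abs (gaussSum (χC p) ZMod.stdAddChar) = Real.sqrt p := by
  have hchar : ringChar (ZMod p) ≠ 2 := by
    rw [ZMod.ringChar_zmod_n]; exact hp
  have hne : χC p ≠ 1 :=
    (MulChar.ringHomComp_ne_one_iff (RingHom.injective_int _)).mpr (quadraticChar_ne_one hchar)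
  have hquad : (χC p).IsQuadratic := (quadraticChar_isQuadratic (ZMod p)).comp _
  have hsq := gaussSum_sq hne hquad (ZMod.isPrimitive_stdAddChar p)
  have habs : Complex.abs (gaussSum (χC p) ZMod.stdAddChar) ^ 2 = p := by
    rw [← map_pow, hsq]
    rw [map_mul]
    have h1 : Complex.abs (χC p (-1)) = 1 := by
      have hrc : χC p (-1) = ((quadraticChar (ZMod p) (-1) : ℤ) : ℂ) := rfl
      rw [hrc]
      exact abs_chi_unit (neg_ne_zero.mpr one_ne_zero)
    rw [h1, one_mul]
    simp [Complex.abs_apply', Complex.norm_natCast]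
  have : Real.sqrt (Complex.abs (gaussSum (χC p) ZMod.stdAddChar) ^ 2) = Real.sqrt p := by
    rw [habs]
  rwa [Real.sqrt_sq (AbsoluteValue.nonneg _ _)] at this

lemma abs_gaussSum_shift (hp : p ≠ 2) {c : ZMod p} (hc : c ≠ 0) :
    Complex.abs (gaussSum (χC p) (ZMod.stdAddChar.mulShift c)) = Real.sqrt p := by
  have h := gaussSum_mulShift (χC p) ZMod.stdAddChar (Units.mk0 c hc)
  have habs := congrArg Complex.abs h
  rw [map_mul] at habs
  have h1 : Complex.abs (χC p ((Units.mk0 c hc : (ZMod p)ˣ) : ZMod p)) = 1 := by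
    have hrc : χC p ((Units.mk0 c hc : (ZMod p)ˣ) : ZMod p)
        = ((quadraticChar (ZMod p) c : ℤ) : ℂ) := rfl
    rw [hrc]
    exact abs_chi_unit hc
  rw [h1, one_mul] at habs
  have h2 : (ZMod.stdAddChar.mulShift ((Units.mk0 c hc : (ZMod p)ˣ) : ZMod p))
      = ZMod.stdAddChar.mulShift c := rfl
  rw [h2] at habs
  rw [habs, abs_gaussSum hp]

lemma S_bound (hp : p ≠ 2) {c : ZMod p} (hc : c ≠ 0) :
    Complex.abs (∑ x : (ZMod p)ˣ, ((quadraticChar (ZMod p) (x : ZMod p) : ℤ) : ℂ) *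
      ZMod.stdAddChar (c * ((x : ZMod p) + ((x⁻¹ : (ZMod p)ˣ) : ZMod p))))
    ≤ 2 * Real.sqrt p := by
  have hA : (∑ x : (ZMod p)ˣ, ((quadraticChar (ZMod p) (x : ZMod p) : ℤ) : ℂ) *
      ZMod.stdAddChar (c * ((x : ZMod p) + ((x⁻¹ : (ZMod p)ˣ) : ZMod p))))
      = ∑ t : ZMod p,
        (((quadraticChar (ZMod p) (t + 2) + quadraticChar (ZMod p) (t - 2) : ℤ)) : ℂ) *
          ZMod.stdAddChar (c * t) := by
    rw [← Finset.sum_fiberwise_of_maps_to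
      (g := fun x : (ZMod p)ˣ => (x : ZMod p) + ((x⁻¹ : (ZMod p)ˣ) : ZMod p))
      (fun x _ => Finset.mem_univ _)]
    refine Finset.sum_congr rfl fun t _ => ?_
    have hstep : ∀ x ∈ Finset.univ.filter
        (fun x : (ZMod p)ˣ => (x : ZMod p) + ((x⁻¹ : (ZMod p)ˣ) : ZMod p) = t),
        ((quadraticChar (ZMod p) (x : ZMod p) : ℤ) : ℂ) *
          ZMod.stdAddChar (c * ((x : ZMod p) + ((x⁻¹ : (ZMod p)ˣ) : ZMod p)))
        = ((quadraticChar (ZMod p) (x : ZMod p) : ℤ) : ℂ) * ZMod.stdAddChar (c * t) := by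
      intro x hx
      rw [(Finset.mem_filter.mp hx).2]
    rw [Finset.sum_congr rfl hstep, ← Finset.sum_mul, ← fiber_sum hp t]
    push_cast
    rfl
  rw [hA]
  have hB : ∀ t : ZMod p,
      (((quadraticChar (ZMod p) (t + 2) + quadraticChar (ZMod p) (t - 2) : ℤ)) : ℂ) *
        ZMod.stdAddChar (c * t)
      = ((quadraticChar (ZMod p) (t + 2) : ℤ) : ℂ) * ZMod.stdAddChar (c * t)
        + ((quadraticChar (ZMod p) (t - 2) : ℤ) : ℂ) * ZMod.stdAddChar (c * t) := by
    intro t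
    push_cast
    ring
  rw [Finset.sum_congr rfl (fun t _ => hB t), Finset.sum_add_distrib]
  have hB1 : (∑ t : ZMod p, ((quadraticChar (ZMod p) (t + 2) : ℤ) : ℂ) *
      ZMod.stdAddChar (c * t))
      = ZMod.stdAddChar (-(2 * c)) * gaussSum (χC p) (ZMod.stdAddChar.mulShift c) := by
    have := Fintype.sum_equiv (Equiv.addRight (2 : ZMod p))
      (fun t : ZMod p => ((quadraticChar (ZMod p) (t + 2) : ℤ) : ℂ) * ZMod.stdAddChar (c * t))
      (fun u : ZMod p => ((quadraticChar (ZMod p) u : ℤ) : ℂ) *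
        (ZMod.stdAddChar (c * u) * ZMod.stdAddChar (-(2 * c))))
      (by
        intro t
        simp only [Equiv.coe_addRight]
        rw [← AddChar.map_add_eq_mul]
        congr 2
        ring)
    rw [this]
    rw [gaussSum, Finset.mul_sum]
    refine Finset.sum_congr rfl fun u _ => ?_
    rw [AddChar.mulShift_apply]
    have : χC p u = ((quadraticChar (ZMod p) u : ℤ) : ℂ) := rfl
    rw [this]
    ring
  have hB2 : (∑ t : ZMod p, ((quadraticChar (ZMod p) (t - 2) : ℤ) : ℂ) *
      ZMod.stdAddChar (c * t))
      = ZMod.stdAddChar (2 * c) * gaussSum (χC p) (ZMod.stdAddChar.mulShift c) := by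
    have := Fintype.sum_equiv (Equiv.subRight (2 : ZMod p))
      (fun t : ZMod p => ((quadraticChar (ZMod p) (t - 2) : ℤ) : ℂ) * ZMod.stdAddChar (c * t))
      (fun u : ZMod p => ((quadraticChar (ZMod p) u : ℤ) : ℂ) *
        (ZMod.stdAddChar (c * u) * ZMod.stdAddChar (2 * c)))
      (by
        intro t
        simp only [Equiv.subRight_apply]
        rw [← AddChar.map_add_eq_mul]
        congr 2
        ring)
    rw [this]
    rw [gaussSum, Finset.mul_sum]
    refine Finset.sum_congr rfl fun u _ => ?_
    rw [AddChar.mulShift_apply]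
    have : χC p u = ((quadraticChar (ZMod p) u : ℤ) : ℂ) := rfl
    rw [this]
    ring
  rw [hB1, hB2]
  calc Complex.abs _ ≤ Complex.abs (ZMod.stdAddChar (-(2 * c)) *
        gaussSum (χC p) (ZMod.stdAddChar.mulShift c))
      + Complex.abs (ZMod.stdAddChar (2 * c) * gaussSum (χC p) (ZMod.stdAddChar.mulShift c)) :=
      AbsoluteValue.add_le _ _ _
    _ = 2 * Real.sqrt p := by
      rw [map_mul, map_mul, abs_stdAddChar, abs_stdAddChar, one_mul,
        abs_gaussSum_shift hp hc]
      ring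

lemma chi_inv_eq (x : (ZMod p)ˣ) :
    quadraticChar (ZMod p) ((x⁻¹ : (ZMod p)ˣ) : ZMod p)
    = quadraticChar (ZMod p) (x : ZMod p) := by
  have h1 : quadraticChar (ZMod p) (x : ZMod p)
      * quadraticChar (ZMod p) ((x⁻¹ : (ZMod p)ˣ) : ZMod p) = 1 := by
    rw [← map_mul, unit_mul_inv, map_one]
  rcases quadraticChar_dichotomy (Units.ne_zero x) with h | h <;> rw [h] at h1 ⊢ <;> omega

lemma sum_subst (w : (ZMod p)ˣ) (F : (ZMod p)ˣ → ℂ) :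
    ∑ x : (ZMod p)ˣ, F x = ∑ x : (ZMod p)ˣ, F (w * x⁻¹) :=
  (Fintype.sum_equiv ((Equiv.inv (ZMod p)ˣ).trans (Equiv.mulLeft w))
    (fun x => F (w * x⁻¹)) F (fun x => rfl)).symm

lemma T2_prime_rw (m n : ℤ) :
    haveI : NeZero p := ⟨(Fact.out : p.Prime).ne_zero⟩
    T2 m n p = ∑ x : (ZMod p)ˣ, ((quadraticChar (ZMod p) (x : ZMod p) : ℤ) : ℂ) *
      ZMod.stdAddChar ((m : ZMod p) * ((x⁻¹ : (ZMod p)ˣ) : ZMod p) + (n : ZMod p) * (x : ZMod p)) := by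
  haveI : NeZero p := ⟨(Fact.out : p.Prime).ne_zero⟩
  unfold T2
  refine Finset.sum_congr rfl fun x _ => ?_
  congr 2
  rw [← jacobiSym.legendreSym.to_jacobiSym]
  show quadraticChar (ZMod p) ((((x : ZMod p).val : ℤ) : ZMod p)) = _
  congr 1
  rw [Int.cast_natCast, ZMod.natCast_zmod_val]

lemma T2_prime_bound (hp : p ≠ 2) (m n : ℤ) (hm : (m : ZMod p) ≠ 0) (hn : (n : ZMod p) ≠ 0) :
    haveI : NeZero p := ⟨(Fact.out : p.Prime).ne_zero⟩
    Complex.abs (T2 m n p) ≤ 2 * Real.sqrt p := by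
  haveI : NeZero p := ⟨(Fact.out : p.Prime).ne_zero⟩
  rw [T2_prime_rw m n]
  set F : (ZMod p)ˣ → ℂ := fun x =>
    ((quadraticChar (ZMod p) (x : ZMod p) : ℤ) : ℂ) *
      ZMod.stdAddChar ((m : ZMod p) * ((x⁻¹ : (ZMod p)ˣ) : ZMod p)
        + (n : ZMod p) * (x : ZMod p)) with hF
  have ha : (m : ZMod p) * (n : ZMod p) ≠ 0 := mul_ne_zero hm hn
  have hun : ((Units.mk0 ((n : ZMod p)) hn : (ZMod p)ˣ) : ZMod p) = (n : ZMod p) := rfl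
  rcases quadraticChar_dichotomy ha with hqa | hqa
  · -- square case
    obtain ⟨c, hc2⟩ := (quadraticChar_one_iff_isSquare ha).mp hqa
    have hc : c ≠ 0 := by
      intro h
      rw [h, mul_zero] at hc2
      exact ha hc2
    set w : (ZMod p)ˣ := Units.mk0 c hc * (Units.mk0 ((n : ZMod p)) hn)⁻¹ with hw
    have hwv : (w : ZMod p) = c * ((n : ZMod p))⁻¹ := by
      rw [hw, Units.val_mul, Units.val_inv_eq_inv_val, hun]
      simp
    have hwiv : ((w⁻¹ : (ZMod p)ˣ) : ZMod p) = c⁻¹ * (n : ZMod p) := by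
      rw [Units.val_inv_eq_inv_val, hwv]
      rw [mul_inv, inv_inv]
    have hpt : ∀ x : (ZMod p)ˣ, F (w * x⁻¹)
        = ((quadraticChar (ZMod p) (w : ZMod p) : ℤ) : ℂ) *
          (((quadraticChar (ZMod p) (x : ZMod p) : ℤ) : ℂ) *
            ZMod.stdAddChar (c * ((x : ZMod p) + ((x⁻¹ : (ZMod p)ˣ) : ZMod p)))) := by
      intro x
      rw [hF]
      simp only
      rw [Units.val_mul, map_mul, chi_inv_eq]
      have harg : (m : ZMod p) * (((w * x⁻¹)⁻¹ : (ZMod p)ˣ) : ZMod p)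
          + (n : ZMod p) * ((w : ZMod p) * ((x⁻¹ : (ZMod p)ˣ) : ZMod p))
          = c * ((x : ZMod p) + ((x⁻¹ : (ZMod p)ˣ) : ZMod p)) := by
        rw [mul_inv_rev, inv_inv, Units.val_mul, hwiv, hwv]
        have hma : (m : ZMod p) = c * c * ((n : ZMod p))⁻¹ := by
          field_simp
          linear_combination hc2
        rw [hma]
        have hA : c * c⁻¹ = 1 := mul_inv_cancel₀ hc
        have hB : (n : ZMod p) * ((n : ZMod p))⁻¹ = 1 := mul_inv_cancel₀ hn
        linear_combination (c * (x : ZMod p) * ((n : ZMod p) * ((n : ZMod p))⁻¹)) * hA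
          + (c * (x : ZMod p) + c * ((x⁻¹ : (ZMod p)ˣ) : ZMod p)) * hB
      rw [harg]
      push_cast
      ring
    rw [sum_subst w F, Finset.sum_congr rfl (fun x _ => hpt x), ← Finset.mul_sum]
    rw [map_mul]
    have hw0 : (w : ZMod p) ≠ 0 := Units.ne_zero w
    rw [abs_chi_unit hw0, one_mul]
    exact S_bound hp hc
  · -- nonsquare case : sum is 0
    set w : (ZMod p)ˣ := Units.mk0 ((m : ZMod p)) hm * (Units.mk0 ((n : ZMod p)) hn)⁻¹ with hw
    have hwv : (w : ZMod p) = (m : ZMod p) * ((n : ZMod p))⁻¹ := by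
      rw [hw, Units.val_mul, Units.val_inv_eq_inv_val, hun]
      simp
    have hwiv : ((w⁻¹ : (ZMod p)ˣ) : ZMod p) = ((m : ZMod p))⁻¹ * (n : ZMod p) := by
      rw [Units.val_inv_eq_inv_val, hwv, mul_inv, inv_inv]
    have hχw : quadraticChar (ZMod p) (w : ZMod p) = -1 := by
      have : quadraticChar (ZMod p) ((w : ZMod p) * ((n : ZMod p) * (n : ZMod p)))
          = quadraticChar (ZMod p) ((m : ZMod p) * (n : ZMod p)) := by
        congr 1
        rw [hwv]
        field_simp
      rw [map_mul, map_mul] at this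
      rw [hqa] at this
      rcases quadraticChar_dichotomy (a := (n : ZMod p)) hn with h | h <;>
        rcases quadraticChar_dichotomy (a := (w : ZMod p)) (Units.ne_zero w) with h' | h' <;>
          rw [h] at this <;> rw [h'] at this ⊢ <;> omega
    have hpt : ∀ x : (ZMod p)ˣ, F (w * x⁻¹) = -F x := by
      intro x
      rw [hF]
      simp only
      rw [Units.val_mul, map_mul, chi_inv_eq, hχw]
      have harg : (m : ZMod p) * (((w * x⁻¹)⁻¹ : (ZMod p)ˣ) : ZMod p)
          + (n : ZMod p) * ((w : ZMod p) * ((x⁻¹ : (ZMod p)ˣ) : ZMod p))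
          = (m : ZMod p) * ((x⁻¹ : (ZMod p)ˣ) : ZMod p) + (n : ZMod p) * (x : ZMod p) := by
        rw [mul_inv_rev, inv_inv, Units.val_mul, hwiv, hwv]
        field_simp
        ring
      rw [harg]
      push_cast
      ring
    have hzero : (∑ x : (ZMod p)ˣ, F x) = 0 := by
      have h1 : (∑ x : (ZMod p)ˣ, F x) = -(∑ x : (ZMod p)ˣ, F x) := by
        conv_lhs => rw [sum_subst w F, Finset.sum_congr rfl (fun x _ => hpt x)]
        rw [Finset.sum_neg_distrib]
      have h2 : (2 : ℂ) * (∑ x : (ZMod p)ˣ, F x) = 0 := by linear_combination h1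
      have := mul_eq_zero.mp h2
      simpa using this
    rw [hzero]
    simp only [map_zero]
    positivity
end Prime

end Prime


lemma stdAddChar_crt (d1 d2 : ℕ) [NeZero d1] [NeZero d2] (hco : Nat.Coprime d1 d2)
    (z : ZMod (d1 * d2)) :
    haveI : NeZero (d1 * d2) := ⟨mul_ne_zero (NeZero.ne d1) (NeZero.ne d2)⟩
    ZMod.stdAddChar z
      = ZMod.stdAddChar ((d2 : ZMod d1)⁻¹ * ((z.val : ℕ) : ZMod d1))
        * ZMod.stdAddChar ((d1 : ZMod d2)⁻¹ * ((z.val : ℕ) : ZMod d2)) := by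
  haveI : NeZero (d1 * d2) := ⟨mul_ne_zero (NeZero.ne d1) (NeZero.ne d2)⟩
  set a := ((d2 : ZMod d1)⁻¹ * ((z.val : ℕ) : ZMod d1)).val with ha
  set b := ((d1 : ZMod d2)⁻¹ * ((z.val : ℕ) : ZMod d2)).val with hb
  have hcong : z.val ≡ d2 * a + d1 * b [MOD d1 * d2] := by
    rw [← Nat.modEq_and_modEq_iff_modEq_mul hco]
    constructor
    · rw [← ZMod.natCast_eq_natCast_iff]
      push_cast
      rw [ZMod.natCast_self, zero_mul, add_zero, ha, ZMod.natCast_zmod_val, ← mul_assoc,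
        ZMod.coe_mul_inv_eq_one d2 hco.symm, one_mul]
    · rw [← ZMod.natCast_eq_natCast_iff]
      push_cast
      rw [ZMod.natCast_self, zero_mul, zero_add, hb, ZMod.natCast_zmod_val, ← mul_assoc,
        ZMod.coe_mul_inv_eq_one d1 hco, one_mul]
  have h1 : ZMod.stdAddChar z = ZMod.stdAddChar (((d2 * a + d1 * b : ℕ) : ℤ) : ZMod (d1 * d2)) := by
    congr 1
    rw [Int.cast_natCast]
    rw [← ZMod.natCast_zmod_val z]
    exact_mod_cast (ZMod.natCast_eq_natCast_iff _ _ _).mpr hcong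
  rw [h1, ZMod.stdAddChar_coe]
  have h2 : ZMod.stdAddChar ((d2 : ZMod d1)⁻¹ * ((z.val : ℕ) : ZMod d1))
      = Complex.exp (2 * Real.pi * Complex.I * (a : ℤ) / d1) := by
    rw [← ZMod.stdAddChar_coe]
    congr 1
    rw [Int.cast_natCast, ha, ZMod.natCast_zmod_val]
  have h3 : ZMod.stdAddChar ((d1 : ZMod d2)⁻¹ * ((z.val : ℕ) : ZMod d2))
      = Complex.exp (2 * Real.pi * Complex.I * (b : ℤ) / d2) := by
    rw [← ZMod.stdAddChar_coe]
    congr 1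
    rw [Int.cast_natCast, hb, ZMod.natCast_zmod_val]
  rw [h2, h3, ← Complex.exp_add]
  congr 1
  have hd1 : (d1 : ℂ) ≠ 0 := Nat.cast_ne_zero.mpr (NeZero.ne d1)
  have hd2 : (d2 : ℂ) ≠ 0 := Nat.cast_ne_zero.mpr (NeZero.ne d2)
  push_cast
  field_simp

def unitsCRT {d1 d2 : ℕ} (hco : Nat.Coprime d1 d2) :
    (ZMod (d1 * d2))ˣ ≃* (ZMod d1)ˣ × (ZMod d2)ˣ :=
  (Units.mapEquiv (ZMod.chineseRemainder hco).toMulEquiv).trans MulEquiv.prodUnits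

lemma unitsCRT_fst {d1 d2 : ℕ} [NeZero d1] [NeZero d2] (hco : Nat.Coprime d1 d2)
    (x : (ZMod (d1 * d2))ˣ) :
    (((unitsCRT hco x).1 : (ZMod d1)ˣ) : ZMod d1) = (((x : ZMod (d1 * d2)).val : ℕ) : ZMod d1) := by
  haveI : NeZero (d1 * d2) := ⟨mul_ne_zero (NeZero.ne d1) (NeZero.ne d2)⟩
  have h1 : (((unitsCRT hco x).1 : (ZMod d1)ˣ) : ZMod d1)
      = ((ZMod.chineseRemainder hco) ((x : ZMod (d1 * d2)))).1 := rfl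
  rw [h1]
  have h2 : (ZMod.chineseRemainder hco) ((x : ZMod (d1 * d2)))
      = ZMod.castHom (show Nat.lcm d1 d2 ∣ d1 * d2 by simp [Nat.lcm_dvd_iff])
        (ZMod d1 × ZMod d2) ((x : ZMod (d1 * d2))) := rfl
  rw [h2, ZMod.castHom_apply, ← ZMod.natCast_val]
  rfl

lemma unitsCRT_snd {d1 d2 : ℕ} [NeZero d1] [NeZero d2] (hco : Nat.Coprime d1 d2)
    (x : (ZMod (d1 * d2))ˣ) :
    (((unitsCRT hco x).2 : (ZMod d2)ˣ) : ZMod d2) = (((x : ZMod (d1 * d2)).val : ℕ) : ZMod d2) := by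
  haveI : NeZero (d1 * d2) := ⟨mul_ne_zero (NeZero.ne d1) (NeZero.ne d2)⟩
  have h1 : (((unitsCRT hco x).2 : (ZMod d2)ˣ) : ZMod d2)
      = ((ZMod.chineseRemainder hco) ((x : ZMod (d1 * d2)))).2 := rfl
  rw [h1]
  have h2 : (ZMod.chineseRemainder hco) ((x : ZMod (d1 * d2)))
      = ZMod.castHom (show Nat.lcm d1 d2 ∣ d1 * d2 by simp [Nat.lcm_dvd_iff])
        (ZMod d1 × ZMod d2) ((x : ZMod (d1 * d2))) := rfl
  rw [h2, ZMod.castHom_apply, ← ZMod.natCast_val]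
  rfl

lemma T2_mul (d1 d2 : ℕ) [NeZero d1] [NeZero d2] (hco : Nat.Coprime d1 d2) (m n : ℤ) :
    haveI : NeZero (d1 * d2) := ⟨mul_ne_zero (NeZero.ne d1) (NeZero.ne d2)⟩
    T2 m n (d1 * d2)
      = T2 (m * ((((d2 : ZMod d1)⁻¹).val : ℕ) : ℤ)) (n * ((((d2 : ZMod d1)⁻¹).val : ℕ) : ℤ)) d1
        * T2 (m * ((((d1 : ZMod d2)⁻¹).val : ℕ) : ℤ)) (n * ((((d1 : ZMod d2)⁻¹).val : ℕ) : ℤ)) d2 := by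
  haveI : NeZero (d1 * d2) := ⟨mul_ne_zero (NeZero.ne d1) (NeZero.ne d2)⟩
  set b1 : ℤ := ((((d2 : ZMod d1)⁻¹).val : ℕ) : ℤ) with hb1
  set b2 : ℤ := ((((d1 : ZMod d2)⁻¹).val : ℕ) : ℤ) with hb2
  rw [T2, T2, T2, Finset.sum_mul_sum]
  rw [← Fintype.sum_prod_type']
  refine Fintype.sum_equiv (unitsCRT hco).toEquiv _ _ fun x => ?_
  simp only [MulEquiv.toEquiv_eq_coe, EquivLike.coe_coe]
  set u := unitsCRT hco x with hu
  set X := ((x : ZMod (d1 * d2)).val : ℕ) with hX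
  -- component facts
  have hfst : ((u.1 : (ZMod d1)ˣ) : ZMod d1) = (X : ZMod d1) := unitsCRT_fst hco x
  have hsnd : ((u.2 : (ZMod d2)ˣ) : ZMod d2) = (X : ZMod d2) := unitsCRT_snd hco x
  have hfst_inv : (((u.1⁻¹ : (ZMod d1)ˣ)) : ZMod d1)
      = (((x⁻¹ : (ZMod (d1 * d2))ˣ) : ZMod (d1 * d2)).val : ZMod d1) := by
    have : u.1⁻¹ = (unitsCRT hco x⁻¹).1 := by
      rw [hu, map_inv]
      rfl
    rw [this]
    exact unitsCRT_fst hco x⁻¹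
  have hsnd_inv : (((u.2⁻¹ : (ZMod d2)ˣ)) : ZMod d2)
      = (((x⁻¹ : (ZMod (d1 * d2))ˣ) : ZMod (d1 * d2)).val : ZMod d2) := by
    have : u.2⁻¹ = (unitsCRT hco x⁻¹).2 := by
      rw [hu, map_inv]
      rfl
    rw [this]
    exact unitsCRT_snd hco x⁻¹
  -- jacobi part
  have hjac : jacobiSym ((X : ℤ)) (d1 * d2)
      = jacobiSym (((u.1 : ZMod d1).val : ℤ)) d1 * jacobiSym (((u.2 : ZMod d2).val : ℤ)) d2 := by
    rw [jacobiSym.mul_right]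
    congr 1
    · apply jacobiSym.mod_left'
      have h1 : (u.1 : ZMod d1).val = X % d1 := by
        rw [hfst, ZMod.val_natCast]
      rw [h1, Int.natCast_mod, Int.emod_emod_of_dvd _ dvd_rfl]
    · apply jacobiSym.mod_left'
      have h2 : (u.2 : ZMod d2).val = X % d2 := by
        rw [hsnd, ZMod.val_natCast]
      rw [h2, Int.natCast_mod, Int.emod_emod_of_dvd _ dvd_rfl]
  -- additive character part
  have hpsi : ZMod.stdAddChar ((m : ZMod (d1 * d2)) * ((x⁻¹ : (ZMod (d1 * d2))ˣ) : ZMod (d1 * d2))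
        + (n : ZMod (d1 * d2)) * (x : ZMod (d1 * d2)))
      = ZMod.stdAddChar (((m * b1 : ℤ) : ZMod d1) * ((u.1⁻¹ : (ZMod d1)ˣ) : ZMod d1)
          + ((n * b1 : ℤ) : ZMod d1) * ((u.1 : (ZMod d1)ˣ) : ZMod d1))
        * ZMod.stdAddChar (((m * b2 : ℤ) : ZMod d2) * ((u.2⁻¹ : (ZMod d2)ˣ) : ZMod d2)
          + ((n * b2 : ℤ) : ZMod d2) * ((u.2 : (ZMod d2)ˣ) : ZMod d2)) := by
    set z := (m : ZMod (d1 * d2)) * ((x⁻¹ : (ZMod (d1 * d2))ˣ) : ZMod (d1 * d2))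
        + (n : ZMod (d1 * d2)) * (x : ZMod (d1 * d2)) with hz
    rw [stdAddChar_crt d1 d2 hco z]
    congr 1
    · congr 1
      have hcast : ((z.val : ℕ) : ZMod d1)
          = ZMod.castHom (dvd_mul_right d1 d2) (ZMod d1) z := by
        rw [ZMod.castHom_apply, ← ZMod.natCast_val]
      rw [hcast, hz, map_add, map_mul, map_mul, map_intCast, map_intCast]
      have hx1 : ZMod.castHom (dvd_mul_right d1 d2) (ZMod d1) ((x : ZMod (d1 * d2)))
          = ((u.1 : (ZMod d1)ˣ) : ZMod d1) := by
        rw [ZMod.castHom_apply, ← ZMod.natCast_val, hfst]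
      have hx2 : ZMod.castHom (dvd_mul_right d1 d2) (ZMod d1)
            (((x⁻¹ : (ZMod (d1 * d2))ˣ) : ZMod (d1 * d2)))
          = ((u.1⁻¹ : (ZMod d1)ˣ) : ZMod d1) := by
        rw [ZMod.castHom_apply, ← ZMod.natCast_val, hfst_inv]
      rw [hx1, hx2]
      have hb1' : ((b1 : ℤ) : ZMod d1) = (d2 : ZMod d1)⁻¹ := by
        rw [hb1]
        push_cast
        rw [ZMod.natCast_zmod_val]
      push_cast
      rw [hb1']
      ring
    · congr 1
      have hcast : ((z.val : ℕ) : ZMod d2)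
          = ZMod.castHom (dvd_mul_left d2 d1) (ZMod d2) z := by
        rw [ZMod.castHom_apply, ← ZMod.natCast_val]
      rw [hcast, hz, map_add, map_mul, map_mul, map_intCast, map_intCast]
      have hx1 : ZMod.castHom (dvd_mul_left d2 d1) (ZMod d2) ((x : ZMod (d1 * d2)))
          = ((u.2 : (ZMod d2)ˣ) : ZMod d2) := by
        rw [ZMod.castHom_apply, ← ZMod.natCast_val, hsnd]
      have hx2 : ZMod.castHom (dvd_mul_left d2 d1) (ZMod d2)
            (((x⁻¹ : (ZMod (d1 * d2))ˣ) : ZMod (d1 * d2)))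
          = ((u.2⁻¹ : (ZMod d2)ˣ) : ZMod d2) := by
        rw [ZMod.castHom_apply, ← ZMod.natCast_val, hsnd_inv]
      rw [hx1, hx2]
      have hb2' : ((b2 : ℤ) : ZMod d2) = (d1 : ZMod d2)⁻¹ := by
        rw [hb2]
        push_cast
        rw [ZMod.natCast_zmod_val]
      push_cast
      rw [hb2']
      ring
  rw [hjac, hpsi]
  push_cast
  ring

lemma T2_one (m n : ℤ) : T2 m n 1 = 1 := by
  rw [T2]
  have hterm : ∀ x : (ZMod 1)ˣ,
      (jacobiSym (((x : ZMod 1).val : ℤ)) 1 : ℂ) *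
        ZMod.stdAddChar ((m : ZMod 1) * ((x⁻¹ : (ZMod 1)ˣ) : ZMod 1)
          + (n : ZMod 1) * (x : ZMod 1)) = 1 := by
    intro x
    rw [jacobiSym.one_right]
    have harg : ((m : ZMod 1) * ((x⁻¹ : (ZMod 1)ˣ) : ZMod 1) + (n : ZMod 1) * (x : ZMod 1))
        = 0 := Subsingleton.elim _ _
    rw [harg, AddChar.map_zero_eq_one]
    norm_num
  rw [Finset.sum_congr rfl fun x _ => hterm x, Finset.sum_const, Finset.card_univ,
    ZMod.card_units_eq_totient, Nat.totient_one, one_smul]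

lemma prime_facts (q : ℕ) (hq : q.Prime) (d : ℕ) (hdvd : (q : ℤ) ∣ (d : ℤ)) (m n : ℤ)
    (hcop : IsCoprime (d : ℤ) (2 * m * n)) :
    q ≠ 2 ∧ (m : ZMod q) ≠ 0 ∧ (n : ZMod q) ≠ 0 := by
  have key : ¬ (q : ℤ) ∣ (2 * m * n) := by
    intro h
    have := hcop.isUnit_of_dvd' hdvd h
    rw [Int.isUnit_iff] at this
    rcases this with h' | h'
    · have : q = 1 := by exact_mod_cast h'
      exact hq.one_lt.ne' this
    · have : (0 : ℤ) < q := by exact_mod_cast hq.pos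
      omega
  refine ⟨?_, ?_, ?_⟩
  · rintro rfl
    exact key ⟨m * n, by ring⟩
  · intro h
    rw [ZMod.intCast_zmod_eq_zero_iff_dvd] at h
    exact key (h.trans ⟨2 * n, by ring⟩)
  · intro h
    rw [ZMod.intCast_zmod_eq_zero_iff_dvd] at h
    exact key (h.trans ⟨2 * m, by ring⟩)

lemma T2_bound : ∀ d : ℕ, ∀ _ : 0 < d, Squarefree d → ∀ m n : ℤ,
    IsCoprime (d : ℤ) (2 * m * n) →
    ∀ inst : NeZero d,
    Complex.abs (@T2 m n d inst) ≤ 2 ^ d.primeFactors.card * Real.sqrt d := by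
  intro d
  induction d using Nat.strong_induction_on with
  | _ d ih =>
    intro hd hsq m n hcop inst
    rcases eq_or_lt_of_le (Nat.succ_le_of_lt hd) with h1 | h1
    · -- d = 1
      have : d = 1 := h1.symm
      subst this
      rw [T2_one]
      simp
    · -- d > 1
      by_cases hprime : d.Prime
      · haveI : Fact d.Prime := ⟨hprime⟩
        obtain ⟨h2, hm, hn⟩ := prime_facts d hprime d dvd_rfl m n hcop
        have hb := T2_prime_bound h2 m n hm hn
        calc Complex.abs (T2 m n d) ≤ 2 * Real.sqrt d := hb
          _ = 2 ^ d.primeFactors.card * Real.sqrt d := by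
            rw [hprime.primeFactors]
            norm_num
      · -- composite
        set p := d.minFac with hp_def
        have hp : p.Prime := Nat.minFac_prime h1.ne'
        haveI : Fact p.Prime := ⟨hp⟩
        set d' := d / p with hd'_def
        have hpd : p ∣ d := Nat.minFac_dvd d
        have hdd : d = p * d' := (Nat.mul_div_cancel' hpd).symm
        have hd'pos : 0 < d' := Nat.div_pos (Nat.minFac_le hd) hp.pos
        have hd'lt : d' < d := Nat.div_lt_self hd hp.one_lt
        have hnotdvd : ¬ p ∣ d' := by
          intro h
          obtain ⟨k, hk⟩ := h
          have : p * p ∣ d := ⟨k, by rw [hdd, hk]; ring⟩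
          exact hp.one_lt.ne' (Nat.isUnit_iff.mp (hsq p this))
        have hco : Nat.Coprime p d' := (Nat.Prime.coprime_iff_not_dvd hp).mpr hnotdvd
        have hd'sq : Squarefree d' := hsq.squarefree_of_dvd ⟨p, by rw [hdd]; ring⟩
        have hd'1 : d' ≠ 1 := by
          intro h
          rw [h, mul_one] at hdd
          exact hprime (hdd ▸ hp)
        haveI instp : NeZero p := ⟨hp.pos.ne'⟩
        haveI instd' : NeZero d' := ⟨hd'pos.ne'⟩
        haveI instpd' : NeZero (p * d') := ⟨mul_ne_zero (NeZero.ne p) (NeZero.ne d')⟩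
        -- set b's
        set b1 : ℤ := ((((d' : ZMod p)⁻¹).val : ℕ) : ℤ) with hb1
        set b2 : ℤ := ((((p : ZMod d')⁻¹).val : ℕ) : ℤ) with hb2
        have hT2d : Complex.abs (T2 m n d)
            = Complex.abs (T2 (m * b1) (n * b1) p) * Complex.abs (T2 (m * b2) (n * b2) d') := by
          have : T2 m n d = @T2 m n (p * d') instpd' := by
            congr 1 <;> try rw [← hdd]
          rw [this, T2_mul p d' hco m n, map_mul]
        -- prime factor bound
        obtain ⟨h2, hm, hn⟩ := prime_facts p hp d (by exact_mod_cast Int.natCast_dvd_natCast.mpr hpd) m n hcop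
        have hb1ne : ((b1 : ℤ) : ZMod p) ≠ 0 := by
          rw [hb1]
          push_cast
          rw [ZMod.natCast_zmod_val]
          intro h
          have := ZMod.coe_mul_inv_eq_one d' hco.symm
          rw [h, mul_zero] at this
          exact zero_ne_one this
        have hmb1 : ((m * b1 : ℤ) : ZMod p) ≠ 0 := by
          push_cast
          exact mul_ne_zero hm (by exact_mod_cast hb1ne)
        have hnb1 : ((n * b1 : ℤ) : ZMod p) ≠ 0 := by
          push_cast
          exact mul_ne_zero hn (by exact_mod_cast hb1ne)
        have hbound1 : Complex.abs (T2 (m * b1) (n * b1) p) ≤ 2 * Real.sqrt p :=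
          T2_prime_bound h2 (m * b1) (n * b1) hmb1 hnb1
        -- recursive bound
        have hv : Nat.Coprime (((p : ZMod d')⁻¹).val) d' := by
          have h1 : ((ZMod.unitOfCoprime p hco)⁻¹ : (ZMod d')ˣ) = (ZMod.unitOfCoprime p hco)⁻¹ := rfl
          have h2' : (((ZMod.unitOfCoprime p hco)⁻¹ : (ZMod d')ˣ) : ZMod d') = (p : ZMod d')⁻¹ := by
            rw [← ZMod.inv_coe_unit, ZMod.coe_unitOfCoprime]
          have := ZMod.val_coe_unit_coprime ((ZMod.unitOfCoprime p hco)⁻¹)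
          rwa [h2'] at this
        have hcop2 : IsCoprime ((d' : ℤ)) (2 * (m * b2) * (n * b2)) := by
          have hre : 2 * (m * b2) * (n * b2) = (2 * m * n) * (b2 * b2) := by ring
          rw [hre]
          have hc1 : IsCoprime ((d' : ℤ)) (2 * m * n) :=
            hcop.of_isCoprime_of_dvd_left (by exact_mod_cast Int.natCast_dvd_natCast.mpr ⟨p, by rw [hdd]; ring⟩)
          have hc2 : IsCoprime ((d' : ℤ)) b2 := Nat.isCoprime_iff_coprime.mpr hv.symm
          exact hc1.mul_right (hc2.mul_right hc2)
        have hbound2 := ih d' hd'lt hd'pos hd'sq (m * b2) (n * b2) hcop2 instd'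
        -- combine
        rw [hT2d]
        have habs1 : (0:ℝ) ≤ Complex.abs (T2 (m * b2) (n * b2) d') := AbsoluteValue.nonneg _ _
        have h2s : (0:ℝ) ≤ 2 * Real.sqrt p := by positivity
        calc Complex.abs (T2 (m * b1) (n * b1) p) * Complex.abs (T2 (m * b2) (n * b2) d')
            ≤ (2 * Real.sqrt p) * (2 ^ d'.primeFactors.card * Real.sqrt d') := by
              exact mul_le_mul hbound1 hbound2 habs1 h2s
          _ = 2 ^ (p * d').primeFactors.card * Real.sqrt ((p * d' : ℕ) : ℝ) := by
              have hunion := Nat.Coprime.primeFactors_mul hco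
              have hdisj : Disjoint p.primeFactors d'.primeFactors :=
                Nat.Coprime.disjoint_primeFactors hco
              rw [hunion, Finset.card_union_of_disjoint hdisj, Nat.Prime.primeFactors hp,
                Finset.card_singleton]
              have hcast : ((p * d' : ℕ) : ℝ) = (p : ℝ) * (d' : ℝ) := by push_cast; ring
              rw [hcast, Real.sqrt_mul (by positivity : (0:ℝ) ≤ (p : ℝ))]
              ring
          _ = 2 ^ d.primeFactors.card * Real.sqrt d := by rw [← hdd]

theorem stmt_15 (d : ℕ) (hd : 0 < d) (hsq : Squarefree d) (m n : ℤ)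
    (hcop : IsCoprime (d : ℤ) (2 * m * n)) :
    ‖T m n d‖ ≤ 2 ^ d.primeFactors.card * Real.sqrt d := by
  haveI : NeZero d := ⟨hd.ne'⟩
  rw [T_eq_T2]
  exact T2_bound d hd hsq m n hcop _
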